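/- For every real number x with x > 2, one has 1/2 + ∑_{n=1}^∞ 2/((nx+1)(nx+2)) − π/(x·sin(2π/x)) < 0. -/

import Mathlib

open Real

lemma aux_mul_cos_le_sin {s : ℝ} (h0 : 0 ≤ s) (hπ : s ≤ π) :
    s * Real.cos s ≤ Real.sin s := by
  have hd : ∀ t : ℝ, HasDerivAt (fun u => Real.sin u - u * Real.cos u) (t * Real.sin t) t := by
    intro t
    have h2 : HasDerivAt (fun u : ℝ => u * Real.cos u)
        (1 * Real.cos t + t * (-Real.sin t)) t :=
      (hasDerivAt_id t).mul (Real.hasDerivAt_cos t)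
    have := (Real.hasDerivAt_sin t).sub h2
    exact this.congr_deriv (by ring)
  have hmono : MonotoneOn (fun u => Real.sin u - u * Real.cos u) (Set.Icc 0 π) := by
    apply monotoneOn_of_deriv_nonneg (convex_Icc 0 π)
    · exact (Real.continuous_sin.sub (continuous_id.mul Real.continuous_cos)).continuousOn
    · exact fun t _ => ((hd t).differentiableAt).differentiableWithinAt
    · intro t ht
      rw [interior_Icc] at ht
      rw [(hd t).deriv]
      exact mul_nonneg ht.1.le (Real.sin_nonneg_of_nonneg_of_le_pi ht.1.le ht.2.le)
  have := hmono (Set.left_mem_Icc.2 Real.pi_nonneg) ⟨h0, hπ⟩ h0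
  simpa using this

lemma aux_sin_upper {s : ℝ} (h0 : 0 ≤ s) (hπ : s ≤ π) :
    (1 + s^2/6) * Real.sin s ≤ s := by
  set F' : ℝ → ℝ := fun u => 1 - (u/3) * Real.sin u - (1 + u^2/6) * Real.cos u with hF'
  have hdF' : ∀ t : ℝ, HasDerivAt F'
      ((2/3) * (Real.sin t - t * Real.cos t) + (t^2/6) * Real.sin t) t := by
    intro t
    have h1 : HasDerivAt (fun u : ℝ => (u/3) * Real.sin u)
        ((1/3) * Real.sin t + (t/3) * Real.cos t) t :=
      ((hasDerivAt_id t).div_const 3).mul (Real.hasDerivAt_sin t)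
    have h2 : HasDerivAt (fun u : ℝ => (1 + u^2/6) * Real.cos u)
        ((2*t/6) * Real.cos t + (1 + t^2/6) * (-Real.sin t)) t := by
      have hp : HasDerivAt (fun u : ℝ => 1 + u^2/6) (2*t/6) t := by
        have := ((hasDerivAt_pow 2 t).div_const 6).const_add (1:ℝ)
        exact this.congr_deriv (by norm_num)
      exact hp.mul (Real.hasDerivAt_cos t)
    have := ((hasDerivAt_const t (1:ℝ)).sub h1).sub h2
    exact this.congr_deriv (by ring)
  have hF'nonneg : ∀ t ∈ Set.Icc (0:ℝ) π, 0 ≤ F' t := by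
    have hmono : MonotoneOn F' (Set.Icc 0 π) := by
      apply monotoneOn_of_deriv_nonneg (convex_Icc 0 π)
      · exact HasDerivAt.continuousOn (fun t _ => hdF' t)
      · exact fun t _ => ((hdF' t).differentiableAt).differentiableWithinAt
      · intro t ht
        rw [interior_Icc] at ht
        rw [(hdF' t).deriv]
        have h1 := aux_mul_cos_le_sin ht.1.le ht.2.le
        have h2 := Real.sin_nonneg_of_nonneg_of_le_pi ht.1.le ht.2.le
        nlinarith [sq_nonneg t]
    intro t ht
    have := hmono (Set.left_mem_Icc.2 Real.pi_nonneg) ht ht.1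
    simpa [hF'] using this
  set F : ℝ → ℝ := fun u => u - (1 + u^2/6) * Real.sin u with hF
  have hdF : ∀ t : ℝ, HasDerivAt F (F' t) t := by
    intro t
    have hp : HasDerivAt (fun u : ℝ => 1 + u^2/6) (2*t/6) t := by
      have := ((hasDerivAt_pow 2 t).div_const 6).const_add (1:ℝ)
      exact this.congr_deriv (by norm_num)
    have := (hasDerivAt_id t).sub (hp.mul (Real.hasDerivAt_sin t))
    refine this.congr_deriv ?_
    show _ = 1 - (t/3) * Real.sin t - (1 + t^2/6) * Real.cos t
    ring
  have hmonoF : MonotoneOn F (Set.Icc 0 π) := by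
    apply monotoneOn_of_deriv_nonneg (convex_Icc 0 π)
    · exact HasDerivAt.continuousOn (fun t _ => hdF t)
    · exact fun t _ => ((hdF t).differentiableAt).differentiableWithinAt
    · intro t ht
      rw [interior_Icc] at ht
      rw [(hdF t).deriv]
      exact hF'nonneg t ⟨ht.1.le, ht.2.le⟩
  have := hmonoF (Set.left_mem_Icc.2 Real.pi_nonneg) ⟨h0, hπ⟩ h0
  simp only [hF] at this
  simp at this
  linarith

theorem stmt_4 (x : ℝ) (hx : 2 < x) :
    1/2 + (∑' n : ℕ, 2 / ((((n : ℝ)+1)*x + 1) * (((n : ℝ)+1)*x + 2)))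
      - π/(x * Real.sin (2*π/x)) < 0 := by
  have hx0 : (0:ℝ) < x := by linarith
  -- the comparison series (Basel)
  have hbasel : HasSum (fun n : ℕ => (2/x^2) * (1/((n:ℝ)+1)^2)) (2/x^2 * (π^2/6)) := by
    have h1 : HasSum (fun n : ℕ => (1:ℝ)/((n:ℝ)+1)^2) (π^2/6) := by
      have h2 : HasSum (fun n : ℕ => (1:ℝ)/((n+1 : ℕ):ℝ)^2) (π^2/6) :=
        (hasSum_nat_add_iff (f := fun n : ℕ => (1:ℝ)/(n:ℝ)^2) 1).2 (by simpa using hasSum_zeta_two)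
      convert h2 using 2 with n
      push_cast; ring
    exact h1.mul_left _
  have hle : ∀ n : ℕ, 2 / ((((n : ℝ)+1)*x + 1) * (((n : ℝ)+1)*x + 2))
      ≤ (2/x^2) * (1/((n:ℝ)+1)^2) := by
    intro n
    have ha : (0:ℝ) < ((n:ℝ)+1)*x := by positivity
    have h1 : (((n:ℝ)+1)*x)^2 ≤ (((n : ℝ)+1)*x + 1) * (((n : ℝ)+1)*x + 2) := by nlinarith
    have := div_le_div_of_nonneg_left (by norm_num : (0:ℝ) ≤ 2) (by positivity) h1
    calc 2 / ((((n : ℝ)+1)*x + 1) * (((n : ℝ)+1)*x + 2)) ≤ 2 / (((n:ℝ)+1)*x)^2 := this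
      _ = (2/x^2) * (1/((n:ℝ)+1)^2) := by field_simp
  have hsumf : Summable (fun n : ℕ => 2 / ((((n : ℝ)+1)*x + 1) * (((n : ℝ)+1)*x + 2))) := by
    apply Summable.of_nonneg_of_le (fun n => by positivity) hle hbasel.summable
  have hS : (∑' n : ℕ, 2 / ((((n : ℝ)+1)*x + 1) * (((n : ℝ)+1)*x + 2))) < 2/x^2 * (π^2/6) := by
    rw [← hbasel.tsum_eq]
    refine Summable.tsum_lt_tsum hle (i := 0) ?_ hsumf hbasel.summable
    simp only [Nat.cast_zero, zero_add, one_mul, one_pow, div_one, mul_one]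
    rw [div_lt_div_iff₀ (by positivity) (by positivity)]
    nlinarith
  -- the sine bound
  set s := 2*π/x with hs
  have hs0 : 0 < s := by positivity
  have hsπ : s < π := by
    rw [hs, div_lt_iff₀ hx0]
    nlinarith [Real.pi_pos]
  have hsin : 0 < Real.sin s := Real.sin_pos_of_pos_of_lt_pi hs0 hsπ
  have hub := aux_sin_upper hs0.le hsπ.le
  have hR : 1/2 + 2/x^2 * (π^2/6) ≤ π/(x * Real.sin s) := by
    rw [le_div_iff₀ (by positivity)]
    have hxs : x * ((1 + s^2/6) * Real.sin s) ≤ x * s := by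
      exact mul_le_mul_of_nonneg_left hub hx0.le
    have hxss : x * s = 2 * π := by rw [hs]; field_simp
    have hkey : (1/2 + 2/x^2 * (π^2/6)) = (1 + s^2/6)/2 := by
      rw [hs]; field_simp
    rw [hkey]
    nlinarith [hsin]
  linarith
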